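/- Let P be a Markov transition kernel on (S, 𝓑), V : S → [1,∞), C ∈ 𝓑, λ < 1, K < ∞ with PV(x) ≤ λV(x) for x ∉ C and PV(x) ≤ K for x ∈ C. Let τ = inf{n ≥ 1 : X_n ∈ C}. Then P^x(τ < ∞) = 1 for all x, and for 1 ≤ r ≤ λ^{-1}: E^x(r^τ) ≤ V(x) if x ∉ C, and E^x(r^τ) ≤ rK if x ∈ C. -/

import Mathlib

open MeasureTheory ProbabilityTheory Filter

/-- `tauDist κ C n x = P^x(τ = n)` where `τ = inf {n ≥ 1 : X_n ∈ C}` for the Markov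
chain with transition kernel `κ`. -/
noncomputable def tauDist {S : Type*} [MeasurableSpace S] (κ : Kernel S S) (C : Set S) :
    ℕ → S → ℝ
  | 0 => fun _ => 0
  | 1 => fun x => (κ x C).toReal
  | n + 2 => fun x => ∫ y, Set.indicator Cᶜ (tauDist κ C (n + 1)) y ∂(κ x)

namespace Stmt13Aux

variable {S : Type*} [MeasurableSpace S]

lemma integrable_bdd {μ : Measure S} [IsProbabilityMeasure μ] {f : S → ℝ} {c : ℝ}
    (hf : Measurable f) (h0 : ∀ x, 0 ≤ f x) (h1 : ∀ x, f x ≤ c) : Integrable f μ := by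
  refine (integrable_const c).mono' hf.aestronglyMeasurable ?_
  filter_upwards with x
  rw [Real.norm_eq_abs, abs_of_nonneg (h0 x)]
  exact h1 x

lemma measurable_kint (κ : Kernel S S) [IsMarkovKernel κ] {g : S → ℝ} (hg : Measurable g) :
    Measurable fun x => ∫ y, g y ∂(κ x) :=
  (MeasureTheory.StronglyMeasurable.integral_kernel_prod_right'
    (hg.stronglyMeasurable.comp_measurable measurable_snd)).measurable

/-- survival probability `surv13 κ C n x = P^x(τ > n)`. -/
noncomputable def surv13 (κ : Kernel S S) (C : Set S) : ℕ → S → ℝ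
  | 0 => fun _ => 1
  | n + 1 => fun x => ∫ y, Set.indicator Cᶜ (surv13 κ C n) y ∂(κ x)

variable (κ : Kernel S S) [IsMarkovKernel κ] {C : Set S}

lemma surv_props (hC : MeasurableSet C) : ∀ n, Measurable (surv13 κ C n) ∧
    (∀ x, 0 ≤ surv13 κ C n x) ∧ (∀ x, surv13 κ C n x ≤ 1) := by
  intro n
  induction n with
  | zero => exact ⟨measurable_const, fun x => zero_le_one, fun x => le_refl 1⟩
  | succ n ih =>
    obtain ⟨hm, h0, h1⟩ := ih
    have hmi : Measurable (Set.indicator Cᶜ (surv13 κ C n)) := hm.indicator hC.compl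
    have h0i : ∀ y, 0 ≤ Set.indicator Cᶜ (surv13 κ C n) y :=
      fun y => Set.indicator_nonneg (fun z _ => h0 z) y
    have h1i : ∀ y, Set.indicator Cᶜ (surv13 κ C n) y ≤ 1 := by
      intro y
      by_cases hy : y ∈ Cᶜ
      · rw [Set.indicator_of_mem hy]; exact h1 y
      · rw [Set.indicator_of_notMem hy]; exact zero_le_one
    refine ⟨measurable_kint κ hmi, fun x => ?_, fun x => ?_⟩
    · exact integral_nonneg h0i
    · calc ∫ y, Set.indicator Cᶜ (surv13 κ C n) y ∂(κ x)
          ≤ ∫ _, (1 : ℝ) ∂(κ x) :=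
            integral_mono (integrable_bdd hmi h0i h1i) (integrable_const 1) h1i
        _ = 1 := by simp

lemma surv_int (hC : MeasurableSet C) (x : S) (n : ℕ) :
    Integrable (Set.indicator Cᶜ (surv13 κ C n)) (κ x) := by
  obtain ⟨hm, h0, h1⟩ := surv_props κ hC n
  refine integrable_bdd (c := 1) (hm.indicator hC.compl)
    (fun y => Set.indicator_nonneg (fun z _ => h0 z) y) (fun y => ?_)
  by_cases hy : y ∈ Cᶜ
  · rw [Set.indicator_of_mem hy]; exact h1 y
  · rw [Set.indicator_of_notMem hy]; exact zero_le_one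

lemma tau_eq (hC : MeasurableSet C) :
    ∀ n (x : S), tauDist κ C (n + 1) x = surv13 κ C n x - surv13 κ C (n + 1) x := by
  intro n
  induction n with
  | zero =>
    intro x
    have hsum : (κ x) C + (κ x) Cᶜ = 1 := by
      rw [measure_add_measure_compl hC, measure_univ]
    have h1 : ((κ x) C).toReal + ((κ x) Cᶜ).toReal = 1 := by
      rw [← ENNReal.toReal_add (measure_ne_top _ _) (measure_ne_top _ _), hsum]
      simp
    have h2 : surv13 κ C 1 x = ((κ x) Cᶜ).toReal := by
      show ∫ y, Set.indicator Cᶜ (fun _ => (1:ℝ)) y ∂(κ x) = _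
      rw [integral_indicator_const (1 : ℝ) hC.compl]
      simp
      rfl
    show ((κ x) C).toReal = surv13 κ C 0 x - surv13 κ C 1 x
    rw [h2]
    show ((κ x) C).toReal = 1 - ((κ x) Cᶜ).toReal
    linarith
  | succ n ih =>
    intro x
    show ∫ y, Set.indicator Cᶜ (tauDist κ C (n + 1)) y ∂(κ x)
        = surv13 κ C (n + 1) x - surv13 κ C (n + 2) x
    have heq : ∀ y, Set.indicator Cᶜ (tauDist κ C (n + 1)) y
        = Set.indicator Cᶜ (surv13 κ C n) y - Set.indicator Cᶜ (surv13 κ C (n + 1)) y := by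
      intro y
      by_cases hy : y ∈ Cᶜ
      · rw [Set.indicator_of_mem hy, Set.indicator_of_mem hy, Set.indicator_of_mem hy, ih y]
      · rw [Set.indicator_of_notMem hy, Set.indicator_of_notMem hy,
          Set.indicator_of_notMem hy]
        ring
    rw [integral_congr_ae (Filter.Eventually.of_forall heq),
      integral_sub (surv_int κ hC x n) (surv_int κ hC x (n + 1))]
    rfl

omit [IsMarkovKernel κ] in
lemma tau_nonneg : ∀ n (x : S), 0 ≤ tauDist κ C n x := by
  intro n
  induction n with
  | zero => intro x; exact le_refl 0
  | succ n ih =>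
    cases n with
    | zero => intro x; exact ENNReal.toReal_nonneg
    | succ m =>
      intro x
      exact integral_nonneg fun y => Set.indicator_nonneg (fun z _ => ih z) y

lemma tau_measurable (hC : MeasurableSet C) : ∀ n, Measurable (tauDist κ C n) := by
  intro n
  match n with
  | 0 => exact measurable_const
  | n + 1 =>
    have heq : tauDist κ C (n + 1) = fun x => surv13 κ C n x - surv13 κ C (n + 1) x := by
      funext x; exact tau_eq κ hC n x
    rw [heq]
    exact (surv_props κ hC n).1.sub (surv_props κ hC (n + 1)).1

lemma tau_le_one (hC : MeasurableSet C) : ∀ n (x : S), tauDist κ C n x ≤ 1 := by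
  intro n x
  match n with
  | 0 => exact zero_le_one
  | n + 1 =>
    rw [tau_eq κ hC n x]
    have := (surv_props κ hC n).2.2 x
    have := (surv_props κ hC (n + 1)).2.1 x
    linarith

lemma sum_tau (hC : MeasurableSet C) (N : ℕ) (x : S) :
    ∑ i ∈ Finset.range (N + 1), tauDist κ C i x = 1 - surv13 κ C N x := by
  induction N with
  | zero => simp [tauDist, surv13]
  | succ N ih =>
    rw [Finset.sum_range_succ, ih, tau_eq κ hC N x]
    ring

variable {V : S → ℝ} {lam : ℝ}

lemma surv_le (hC : MeasurableSet C) (hV1 : ∀ x, 1 ≤ V x) (hlam0 : 0 < lam)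
    (hVint : ∀ x, Integrable V (κ x)) (hout : ∀ x ∉ C, ∫ y, V y ∂(κ x) ≤ lam * V x) :
    ∀ n, ∀ x ∉ C, surv13 κ C n x ≤ lam ^ n * V x := by
  intro n
  induction n with
  | zero => intro x _; simpa [surv13] using hV1 x
  | succ n ih =>
    intro x hx
    have hpt : ∀ y, Set.indicator Cᶜ (surv13 κ C n) y ≤ lam ^ n * V y := by
      intro y
      by_cases hy : y ∈ Cᶜ
      · rw [Set.indicator_of_mem hy]; exact ih y hy
      · rw [Set.indicator_of_notMem hy]
        have := hV1 y
        positivity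
    calc surv13 κ C (n + 1) x
        ≤ ∫ y, lam ^ n * V y ∂(κ x) :=
          integral_mono (surv_int κ hC x n) ((hVint x).const_mul _) hpt
      _ = lam ^ n * ∫ y, V y ∂(κ x) := integral_const_mul _ _
      _ ≤ lam ^ n * (lam * V x) :=
          mul_le_mul_of_nonneg_left (hout x hx) (by positivity)
      _ = lam ^ (n + 1) * V x := by ring

lemma surv_tendsto (hC : MeasurableSet C) (hV1 : ∀ x, 1 ≤ V x) (hlam0 : 0 < lam)
    (hlam1 : lam < 1)
    (hVint : ∀ x, Integrable V (κ x)) (hout : ∀ x ∉ C, ∫ y, V y ∂(κ x) ≤ lam * V x)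
    (x : S) : Tendsto (fun n => surv13 κ C n x) atTop (nhds 0) := by
  rw [← tendsto_add_atTop_iff_nat 1]
  have hle : ∀ n, surv13 κ C (n + 1) x ≤ lam ^ n * ∫ y, V y ∂(κ x) := by
    intro n
    have hpt : ∀ y, Set.indicator Cᶜ (surv13 κ C n) y ≤ lam ^ n * V y := by
      intro y
      by_cases hy : y ∈ Cᶜ
      · rw [Set.indicator_of_mem hy]
        exact surv_le κ hC hV1 hlam0 hVint hout n y hy
      · rw [Set.indicator_of_notMem hy]
        have := hV1 y
        positivity
    calc surv13 κ C (n + 1) x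
        ≤ ∫ y, lam ^ n * V y ∂(κ x) :=
          integral_mono (surv_int κ hC x n) ((hVint x).const_mul _) hpt
      _ = lam ^ n * ∫ y, V y ∂(κ x) := integral_const_mul _ _
  have hg : Tendsto (fun n => lam ^ n * ∫ y, V y ∂(κ x)) atTop (nhds 0) := by
    have := (tendsto_pow_atTop_nhds_zero_of_lt_one hlam0.le hlam1).mul_const
      (∫ y, V y ∂(κ x))
    simpa using this
  exact squeeze_zero (fun n => (surv_props κ hC (n + 1)).2.1 x) hle hg

end Stmt13Aux

open Stmt13Aux in
theorem stmt13 {S : Type*} [MeasurableSpace S] (κ : Kernel S S) [IsMarkovKernel κ]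
    (C : Set S) (hC : MeasurableSet C)
    (V : S → ℝ) (hVm : Measurable V) (hV1 : ∀ x, 1 ≤ V x)
    (lam K : ℝ) (hlam0 : 0 < lam) (hlam1 : lam < 1)
    (hVint : ∀ x, Integrable V (κ x))
    (hout : ∀ x ∉ C, ∫ y, V y ∂(κ x) ≤ lam * V x)
    (hin : ∀ x ∈ C, ∫ y, V y ∂(κ x) ≤ K) :
    (∀ x, HasSum (fun n => tauDist κ C n x) 1) ∧
      ∀ r : ℝ, 1 ≤ r → r ≤ lam⁻¹ → ∀ x : S,
        (x ∉ C → ∑' n, r ^ n * tauDist κ C n x ≤ V x) ∧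
        (x ∈ C → ∑' n, r ^ n * tauDist κ C n x ≤ r * K) := by
  constructor
  · -- HasSum part
    intro x
    rw [hasSum_iff_tendsto_nat_of_nonneg (fun i => tau_nonneg κ i x) 1]
    rw [← tendsto_add_atTop_iff_nat 1]
    have heq : ∀ N : ℕ, ∑ i ∈ Finset.range (N + 1), tauDist κ C i x
        = 1 - surv13 κ C N x := fun N => sum_tau κ hC N x
    simp only [heq]
    have := (surv_tendsto κ hC hV1 hlam0 hlam1 hVint hout x).const_sub 1
    simpa using this
  · -- moment bounds
    intro r hr1 hrlam x
    have hr0 : 0 < r := lt_of_lt_of_le zero_lt_one hr1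
    have hrl1 : r * lam ≤ 1 := by
      have := mul_le_mul_of_nonneg_right hrlam hlam0.le
      rwa [inv_mul_cancel₀ hlam0.ne'] at this
    -- partial sums G
    set G : ℕ → S → ℝ := fun N x => ∑ i ∈ Finset.range N, r ^ (i + 1) * tauDist κ C (i + 1) x
      with hG
    have hGm : ∀ N, Measurable (G N) := by
      intro N
      apply Finset.measurable_sum
      intro i _
      exact (tau_measurable κ hC (i + 1)).const_mul _
    have hG0 : ∀ N y, 0 ≤ G N y := by
      intro N y
      apply Finset.sum_nonneg
      intro i _
      exact mul_nonneg (pow_nonneg hr0.le _) (tau_nonneg κ (i + 1) y)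
    have hGbd : ∀ N y, G N y ≤ ∑ i ∈ Finset.range N, r ^ (i + 1) := by
      intro N y
      apply Finset.sum_le_sum
      intro i _
      have h1 := tau_le_one κ hC (i + 1) y
      have h2 : 0 ≤ tauDist κ C (i + 1) y := tau_nonneg κ (i + 1) y
      nlinarith [pow_pos hr0 (i + 1)]
    have hGint : ∀ N (z : S), Integrable (Set.indicator Cᶜ (G N)) (κ z) := by
      intro N z
      refine integrable_bdd (c := ∑ i ∈ Finset.range N, r ^ (i + 1)) ((hGm N).indicator hC.compl)
        (fun y => Set.indicator_nonneg (fun w _ => hG0 N w) y) (fun y => ?_)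
      by_cases hy : y ∈ Cᶜ
      · rw [Set.indicator_of_mem hy]; exact hGbd N y
      · rw [Set.indicator_of_notMem hy]
        apply Finset.sum_nonneg
        intro i _
        exact pow_nonneg hr0.le _
    -- key recursion
    have hrec : ∀ N (x : S), G (N + 1) x =
        r * ∫ y, (Set.indicator C (fun _ => (1:ℝ)) y + Set.indicator Cᶜ (G N) y) ∂(κ x) := by
      intro N x
      have hint1 : Integrable (Set.indicator C (fun _ => (1:ℝ))) (κ x) :=
        (integrable_const (1:ℝ)).indicator hC
      have htint : ∀ i, Integrable (fun y => r ^ (i + 2) *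
          Set.indicator Cᶜ (tauDist κ C (i + 1)) y) (κ x) := by
        intro i
        refine Integrable.const_mul ?_ _
        refine integrable_bdd (c := 1) ((tau_measurable κ hC (i + 1)).indicator hC.compl)
          (fun y => Set.indicator_nonneg (fun z _ => tau_nonneg κ (i + 1) z) y) (fun y => ?_)
        by_cases hy : y ∈ Cᶜ
        · rw [Set.indicator_of_mem hy]; exact tau_le_one κ hC (i + 1) y
        · rw [Set.indicator_of_notMem hy]; exact zero_le_one
      calc G (N + 1) x
          = (∑ i ∈ Finset.range N, r ^ (i + 2) * tauDist κ C (i + 2) x)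
              + r ^ 1 * tauDist κ C 1 x := by
            rw [hG]
            exact Finset.sum_range_succ' _ N
        _ = (∑ i ∈ Finset.range N,
              ∫ y, r ^ (i + 2) * Set.indicator Cᶜ (tauDist κ C (i + 1)) y ∂(κ x))
              + r * ((κ x) C).toReal := by
            congr 1
            · apply Finset.sum_congr rfl
              intro i _
              rw [integral_const_mul]
              rfl
            · rw [pow_one]
              rfl
        _ = (∫ y, ∑ i ∈ Finset.range N,
              r ^ (i + 2) * Set.indicator Cᶜ (tauDist κ C (i + 1)) y ∂(κ x))
              + r * ((κ x) C).toReal := by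
            rw [integral_finset_sum _ (fun i _ => htint i)]
        _ = (∫ y, r * Set.indicator Cᶜ (G N) y ∂(κ x)) + r * ((κ x) C).toReal := by
            congr 1
            apply integral_congr_ae
            filter_upwards with y
            by_cases hy : y ∈ Cᶜ
            · simp only [Set.indicator_of_mem hy, hG, Finset.mul_sum]
              apply Finset.sum_congr rfl
              intro i _
              ring
            · simp [Set.indicator_of_notMem hy]
        _ = r * ∫ y, (Set.indicator C (fun _ => (1:ℝ)) y + Set.indicator Cᶜ (G N) y) ∂(κ x) := by
            rw [integral_add hint1 (hGint N x), integral_const_mul,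
              integral_indicator_const (1:ℝ) hC]
            simp only [smul_eq_mul, mul_one, Measure.real]
            ring
    -- pointwise bound on integrand
    have hipt : ∀ N, (∀ y ∉ C, G N y ≤ V y) →
        ∀ y, Set.indicator C (fun _ => (1:ℝ)) y + Set.indicator Cᶜ (G N) y ≤ V y := by
      intro N hGV y
      by_cases hy : y ∈ C
      · rw [Set.indicator_of_mem hy, Set.indicator_of_notMem (by simpa using hy)]
        simpa using hV1 y
      · rw [Set.indicator_of_notMem hy, Set.indicator_of_mem (by simpa using hy)]
        simpa using hGV y hy
    have hinteg : ∀ N (z : S), Integrable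
        (fun y => Set.indicator C (fun _ => (1:ℝ)) y + Set.indicator Cᶜ (G N) y) (κ z) :=
      fun N z => ((integrable_const (1:ℝ)).indicator hC).add (hGint N z)
    have hGV : ∀ N, ∀ x ∉ C, G N x ≤ V x := by
      intro N
      induction N with
      | zero =>
        intro x _
        simp only [hG, Finset.range_zero, Finset.sum_empty]
        linarith [hV1 x]
      | succ N ih =>
        intro x hx
        calc G (N + 1) x
            = r * ∫ y, (Set.indicator C (fun _ => (1:ℝ)) y + Set.indicator Cᶜ (G N) y) ∂(κ x) :=
              hrec N x
          _ ≤ r * ∫ y, V y ∂(κ x) :=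
              mul_le_mul_of_nonneg_left
                (integral_mono (hinteg N x) (hVint x) (hipt N ih)) hr0.le
          _ ≤ r * (lam * V x) := mul_le_mul_of_nonneg_left (hout x hx) hr0.le
          _ ≤ V x := by nlinarith [hV1 x]
    -- conclude
    have hsum_eq : ∀ N, ∑ i ∈ Finset.range (N + 1), r ^ i * tauDist κ C i x = G N x := by
      intro N
      rw [Finset.sum_range_succ' (fun i => r ^ i * tauDist κ C i x) N]
      simp [tauDist, hG]
    constructor
    · intro hx
      apply Real.tsum_le_of_sum_range_le
        (fun i => mul_nonneg (pow_nonneg hr0.le _) (tau_nonneg κ i x))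
      intro N
      match N with
      | 0 => simpa using le_trans zero_le_one (hV1 x)
      | N + 1 => rw [hsum_eq N]; exact hGV N x hx
    · intro hx
      have hK1 : 1 ≤ K := by
        have h1 : (1:ℝ) = ∫ _, (1:ℝ) ∂(κ x) := by simp
        have h2 : ∫ _, (1:ℝ) ∂(κ x) ≤ ∫ y, V y ∂(κ x) :=
          integral_mono (integrable_const 1) (hVint x) hV1
        linarith [hin x hx]
      have hGK : ∀ N, G N x ≤ r * K := by
        intro N
        match N with
        | 0 =>
          simp only [hG, Finset.range_zero, Finset.sum_empty]
          nlinarith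
        | N + 1 =>
          calc G (N + 1) x
              = r * ∫ y, (Set.indicator C (fun _ => (1:ℝ)) y + Set.indicator Cᶜ (G N) y) ∂(κ x) :=
                hrec N x
            _ ≤ r * ∫ y, V y ∂(κ x) :=
                mul_le_mul_of_nonneg_left
                  (integral_mono (hinteg N x) (hVint x) (hipt N (hGV N))) hr0.le
            _ ≤ r * K := mul_le_mul_of_nonneg_left (hin x hx) hr0.le
      apply Real.tsum_le_of_sum_range_le
        (fun i => mul_nonneg (pow_nonneg hr0.le _) (tau_nonneg κ i x))
      intro N
      match N with
      | 0 =>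
        simp only [Finset.range_zero, Finset.sum_empty]
        nlinarith
      | N + 1 => rw [hsum_eq N]; exact hGK N
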